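/- The discrete Heisenberg group ℋ is isomorphic to the group presented by ⟨x, y : [x,[x,y]] = 1, [y,[x,y]] = 1⟩, via the map sending x to (0,1,0) and y to (0,0,1). -/

import Mathlib

def H : Type := ℤ × ℤ × ℤ

namespace H

def mk (a b c : ℤ) : H := (a, b, c)

@[simp] lemma fst_mk (a b c : ℤ) : (mk a b c).1 = a := rfl
@[simp] lemma snd_fst_mk (a b c : ℤ) : (mk a b c).2.1 = b := rfl
@[simp] lemma snd_snd_mk (a b c : ℤ) : (mk a b c).2.2 = c := rfl

lemma mk_inj {a b c x y z : ℤ} : mk a b c = mk x y z ↔ a = x ∧ b = y ∧ c = z :=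
  ⟨fun h => ⟨congrArg (fun p : H => p.1) h, congrArg (fun p : H => p.2.1) h,
      congrArg (fun p : H => p.2.2) h⟩,
   fun h => by rw [h.1, h.2.1, h.2.2]⟩

lemma eta (p : H) : p = mk p.1 p.2.1 p.2.2 := rfl

instance : One H := ⟨mk 0 0 0⟩
instance : Mul H := ⟨fun p q => mk (p.1 + q.1 + p.2.1 * q.2.2) (p.2.1 + q.2.1) (p.2.2 + q.2.2)⟩
instance : Inv H := ⟨fun p => mk (-p.1 + p.2.1 * p.2.2) (-p.2.1) (-p.2.2)⟩

lemma mul_def (p q : H) :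
    p * q = mk (p.1 + q.1 + p.2.1 * q.2.2) (p.2.1 + q.2.1) (p.2.2 + q.2.2) := rfl
lemma one_def : (1 : H) = mk 0 0 0 := rfl
lemma inv_def (p : H) : p⁻¹ = mk (-p.1 + p.2.1 * p.2.2) (-p.2.1) (-p.2.2) := rfl

instance instGroup : Group H := Group.ofLeftAxioms
  (by intro p q r
      simp only [mul_def, fst_mk, snd_fst_mk, snd_snd_mk, mk_inj]
      refine ⟨by ring, by ring, by ring⟩)
  (by intro p
      rw [eta p]
      simp only [mul_def, one_def, fst_mk, snd_fst_mk, snd_snd_mk, mk_inj]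
      refine ⟨by ring, by ring, by ring⟩)
  (by intro p
      simp only [mul_def, one_def, inv_def, fst_mk, snd_fst_mk, snd_snd_mk, mk_inj]
      refine ⟨by ring, by ring, by ring⟩)

lemma mk_mul (a b c x y z : ℤ) :
    mk a b c * mk x y z = mk (a + x + b * z) (b + y) (c + z) := by
  simp [mul_def]

lemma mk_inv (a b c : ℤ) : (mk a b c)⁻¹ = mk (-a + b * c) (-b) (-c) := by
  simp [inv_def]

end H

open scoped commutatorElement

/-- The relators of the presentation ⟨x, y : [x,[x,y]], [y,[x,y]]⟩. -/
def heisenbergRels : Set (FreeGroup Bool) :=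
  { ⁅FreeGroup.of true, ⁅FreeGroup.of true, FreeGroup.of false⁆⁆,
    ⁅FreeGroup.of false, ⁅FreeGroup.of true, FreeGroup.of false⁆⁆ }

/- ### Auxiliary lemmas -/

section Key
variable {G : Type*} [Group G] {x y z : G}

lemma heis_step (hzy : Commute z y) (hxy : x * y = z * (y * x)) (r : ℤ) :
    x * y ^ r = z ^ r * (y ^ r * x) := by
  have hsc : SemiconjBy x y (z * y) := by
    unfold SemiconjBy; rw [hxy]; group
  have h2 := hsc.zpow_right r
  have h3 : (z * y) ^ r = z ^ r * y ^ r := hzy.mul_zpow r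
  unfold SemiconjBy at h2
  rw [h3] at h2
  rw [h2, mul_assoc]

lemma heis_key (hzx : Commute z x) (hzy : Commute z y) (hxy : x * y = z * (y * x))
    (b r : ℤ) : x ^ b * y ^ r = z ^ (b * r) * (y ^ r * x ^ b) := by
  have hstep := heis_step hzy hxy r
  have hstep' : x⁻¹ * y ^ r = z ^ (-r) * (y ^ r * x⁻¹) := by
    have hxy' : x⁻¹ * y = z⁻¹ * (y * x⁻¹) := by
      have h1 : x * (z⁻¹ * (y * x⁻¹)) = y := by
        rw [← mul_assoc, ← hzx.inv_left.eq, mul_assoc, ← mul_assoc x y, hxy]; group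
      exact mul_left_cancel (a := x) (by rw [h1]; group)
    have := heis_step (x := x⁻¹) (z := z⁻¹) hzy.inv_left hxy' r
    rw [this, inv_zpow', zpow_neg]
  induction b using Int.induction_on with
  | zero => simp
  | succ b ih =>
      have hc : Commute (z ^ r) (x ^ (b : ℤ)) := hzx.zpow_zpow r b
      calc x ^ ((b : ℤ) + 1) * y ^ r = x ^ (b : ℤ) * (x * y ^ r) := by
            rw [zpow_add_one]; group
        _ = x ^ (b : ℤ) * (z ^ r * (y ^ r * x)) := by rw [hstep]
        _ = z ^ r * (x ^ (b : ℤ) * y ^ r) * x := by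
            rw [← mul_assoc, ← hc.eq]; group
        _ = z ^ r * (z ^ ((b : ℤ) * r) * (y ^ r * x ^ (b : ℤ))) * x := by rw [ih]
        _ = z ^ (((b : ℤ) + 1) * r) * (y ^ r * x ^ ((b : ℤ) + 1)) := by
            rw [show ((b : ℤ)+1)*r = r + (b : ℤ)*r by ring, zpow_add,
              zpow_add_one]; group
  | pred b ih =>
      have hc : Commute (z ^ (-r)) (x ^ (-b : ℤ)) := hzx.zpow_zpow _ _
      calc x ^ (-(b : ℤ) - 1) * y ^ r = x ^ (-b : ℤ) * (x⁻¹ * y ^ r) := by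
            rw [zpow_sub_one]; group
        _ = x ^ (-b : ℤ) * (z ^ (-r) * (y ^ r * x⁻¹)) := by rw [hstep']
        _ = z ^ (-r) * (x ^ (-b : ℤ) * y ^ r) * x⁻¹ := by
            rw [← mul_assoc, ← hc.eq]; group
        _ = z ^ (-r) * (z ^ ((-b : ℤ) * r) * (y ^ r * x ^ (-b : ℤ))) * x⁻¹ := by rw [ih]
        _ = z ^ ((-(b : ℤ) - 1) * r) * (y ^ r * x ^ (-(b : ℤ) - 1)) := by
            rw [show (-(b : ℤ)-1)*r = -r + (-(b:ℤ))*r by ring, zpow_add,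
              zpow_sub_one]; group
end Key

namespace H

lemma zpow_Z (n : ℤ) : (mk 1 0 0 : H) ^ n = mk n 0 0 := by
  induction n using Int.induction_on with
  | zero => rfl
  | succ k ih => rw [zpow_add_one, ih, mk_mul]; simp [mk_inj]
  | pred k ih => rw [zpow_sub_one, ih, mk_inv, mk_mul]; simp [mk_inj]; ring

lemma zpow_X (n : ℤ) : (mk 0 1 0 : H) ^ n = mk 0 n 0 := by
  induction n using Int.induction_on with
  | zero => rfl
  | succ k ih => rw [zpow_add_one, ih, mk_mul]; simp [mk_inj]
  | pred k ih => rw [zpow_sub_one, ih, mk_inv, mk_mul]; simp [mk_inj]; ring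

lemma zpow_Y (n : ℤ) : (mk 0 0 1 : H) ^ n = mk 0 0 n := by
  induction n using Int.induction_on with
  | zero => rfl
  | succ k ih => rw [zpow_add_one, ih, mk_mul]; simp [mk_inj]
  | pred k ih => rw [zpow_sub_one, ih, mk_inv, mk_mul]; simp [mk_inj]; ring

lemma commXY : ⁅(mk 0 1 0 : H), mk 0 0 1⁆ = mk 1 0 0 := by
  rw [commutatorElement_def]
  simp [mk_mul, mk_inv, mk_inj]

end H

namespace HeisAux

abbrev G := PresentedGroup heisenbergRels

noncomputable section

def f : Bool → H := fun b => if b then H.mk 0 1 0 else H.mk 0 0 1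

lemma hrels : ∀ r ∈ heisenbergRels, FreeGroup.lift f r = 1 := by
  intro r hr
  have hcomm : ⁅f true, f false⁆ = H.mk 1 0 0 := by simp [f, H.commXY]
  have hc : ∀ p : H, H.mk 1 0 0 * p = p * H.mk 1 0 0 := by
    intro p
    rw [H.eta p, H.mk_mul, H.mk_mul]
    simp [H.mk_inj]; ring
  rcases hr with h | h <;> subst h <;>
    simp only [map_commutatorElement, FreeGroup.lift_apply_of, hcomm] <;>
    rw [commutatorElement_eq_one_iff_commute] <;>
    exact (hc _).symm

def φ : G →* H := PresentedGroup.toGroup hrels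

lemma φ_x : φ (PresentedGroup.of true) = H.mk 0 1 0 := by
  simp [φ, PresentedGroup.toGroup.of, f]

lemma φ_y : φ (PresentedGroup.of false) = H.mk 0 0 1 := by
  simp [φ, PresentedGroup.toGroup.of, f]

def x : G := PresentedGroup.of true
def y : G := PresentedGroup.of false
def z : G := ⁅x, y⁆

lemma rel_one : ∀ r ∈ heisenbergRels, PresentedGroup.mk heisenbergRels r = 1 := fun _ hr =>
  (QuotientGroup.eq_one_iff _).mpr (Subgroup.subset_normalClosure hr)

lemma mk_of (b : Bool) :
    PresentedGroup.mk heisenbergRels (FreeGroup.of b) = PresentedGroup.of b := rfl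

lemma hxz : Commute x z := by
  rw [← commutatorElement_eq_one_iff_commute]
  have := rel_one _ (Set.mem_insert _ _)
  simp only [map_commutatorElement, mk_of] at this; exact this

lemma hyz : Commute y z := by
  rw [← commutatorElement_eq_one_iff_commute]
  have := rel_one _ (Set.mem_insert_of_mem _ rfl)
  simp only [map_commutatorElement, mk_of] at this; exact this

lemma hxy : x * y = z * (y * x) := by
  rw [z, commutatorElement_def]; group

lemma key (b r : ℤ) : x ^ b * y ^ r = z ^ (b * r) * (y ^ r * x ^ b) :=
  heis_key hxz.symm hyz.symm hxy b r

def ψfun : H → G := fun p => z ^ p.1 * (y ^ p.2.2 * x ^ p.2.1)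

lemma ψ_mul (p q : H) : ψfun (p * q) = ψfun p * ψfun q := by
  obtain ⟨a, b, c⟩ := p
  obtain ⟨d, e, fq⟩ := q
  show ψfun (H.mk a b c * H.mk d e fq) = ψfun (H.mk a b c) * ψfun (H.mk d e fq)
  rw [H.mk_mul]
  show z ^ (a + d + b * fq) * (y ^ (c + fq) * x ^ (b + e)) =
    z ^ a * (y ^ c * x ^ b) * (z ^ d * (y ^ fq * x ^ e))
  have czx : ∀ m n : ℤ, Commute (z ^ m) (x ^ n) := fun m n => (hxz.symm).zpow_zpow m n
  have czy : ∀ m n : ℤ, Commute (z ^ m) (y ^ n) := fun m n => (hyz.symm).zpow_zpow m n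
  calc z ^ (a + d + b * fq) * (y ^ (c + fq) * x ^ (b + e))
      = z ^ a * (z ^ d * (z ^ (b * fq) * (y ^ c * (y ^ fq * (x ^ b * x ^ e))))) := by
        rw [zpow_add, zpow_add, zpow_add y c fq, zpow_add x b e]; group
    _ = z ^ a * (z ^ d * (y ^ c * (z ^ (b * fq) * (y ^ fq * (x ^ b * x ^ e))))) := by
        rw [(czy (b * fq) c).left_comm]
    _ = z ^ a * (z ^ d * (y ^ c * ((x ^ b * y ^ fq) * x ^ e))) := by
        rw [key b fq]; group
    _ = z ^ a * (y ^ c * (z ^ d * (x ^ b * (y ^ fq * x ^ e)))) := by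
        rw [(czy d c).left_comm]; group
    _ = z ^ a * (y ^ c * (x ^ b * (z ^ d * (y ^ fq * x ^ e)))) := by
        rw [(czx d b).left_comm]
    _ = z ^ a * (y ^ c * x ^ b) * (z ^ d * (y ^ fq * x ^ e)) := by group

def ψ : H →* G := MonoidHom.mk' ψfun ψ_mul

lemma φ_z : φ z = H.mk 1 0 0 := by
  rw [z, map_commutatorElement]
  show ⁅φ x, φ y⁆ = H.mk 1 0 0
  rw [x, y, φ_x, φ_y, H.commXY]

lemma right_inv : ∀ p : H, φ (ψ p) = p := by
  intro p
  rw [H.eta p]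
  show φ (ψfun (H.mk p.1 p.2.1 p.2.2)) = H.mk p.1 p.2.1 p.2.2
  show φ (z ^ p.1 * (y ^ p.2.2 * x ^ p.2.1)) = H.mk p.1 p.2.1 p.2.2
  rw [map_mul, map_mul, map_zpow, map_zpow, map_zpow, φ_z, x, y, φ_x, φ_y,
    H.zpow_Z, H.zpow_X, H.zpow_Y, H.mk_mul, H.mk_mul]
  simp [H.mk_inj]

lemma left_inv : ∀ g : G, ψ (φ g) = g := by
  have : (ψ.comp φ) = MonoidHom.id G := by
    apply PresentedGroup.ext
    intro b
    cases b
    · show ψ (φ (PresentedGroup.of false)) = PresentedGroup.of false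
      rw [φ_y]
      show ψfun (H.mk 0 0 1) = y
      show z ^ (0:ℤ) * (y ^ (1:ℤ) * x ^ (0:ℤ)) = y
      simp
    · show ψ (φ (PresentedGroup.of true)) = PresentedGroup.of true
      rw [φ_x]
      show ψfun (H.mk 0 1 0) = x
      show z ^ (0:ℤ) * (y ^ (0:ℤ) * x ^ (1:ℤ)) = x
      simp
  intro g
  exact DFunLike.congr_fun this g

end
end HeisAux

/-- The discrete Heisenberg group is isomorphic to ⟨x, y : [x,[x,y]], [y,[x,y]]⟩ via
x ↦ (0,1,0), y ↦ (0,0,1). -/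
theorem heisenberg_presentation :
    ∃ e : PresentedGroup heisenbergRels ≃* H,
      e (PresentedGroup.of true) = H.mk 0 1 0 ∧
      e (PresentedGroup.of false) = H.mk 0 0 1 := by
  exact ⟨MulEquiv.mk' ⟨HeisAux.φ, HeisAux.ψ, HeisAux.left_inv, HeisAux.right_inv⟩
    (map_mul HeisAux.φ), HeisAux.φ_x, HeisAux.φ_y⟩
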